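/- arXiv:2302.08974 — 4 statements merged into one kernel-verified Lean document; each statement's English description precedes it below -/
import Mathlib

section
/- Let a : Fin m → Fin C be a sequence and σ a permutation of Fin m. The constant sequence a_C (all entries equal to the maximal symbol C) satisfies: the monomial M^σ_{a_C}(Z) = Z_C^{m(m+1)/2}, and for any sequence b not equal to a_C and any permutation τ, the monomial M^τ_b is not equal to Z_C^{m(m+1)/2}. -/
open MvPolynomial

/-- The monomial `M^σ_a(Z) = ∏ i, Z_{a i}^{σ i}`, with exponents in `{1,…,m}`. -/
noncomputable def seqMonomial {m C : ℕ} (a : Fin m → Fin C) (σ : Equiv.Perm (Fin m)) :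
    MvPolynomial (Fin C) ℤ :=
  ∏ i : Fin m, (X (a i)) ^ ((σ i : ℕ) + 1)

lemma sum_perm_succ {m : ℕ} (σ : Equiv.Perm (Fin m)) :
    ∑ i : Fin m, ((σ i : ℕ) + 1) = m * (m + 1) / 2 := by
  rw [Equiv.sum_comp σ (fun i : Fin m => (i : ℕ) + 1)]
  rw [Fin.sum_univ_eq_sum_range (fun i => i + 1)]
  have : ∑ i ∈ Finset.range m, (i + 1) = ∑ i ∈ Finset.range (m + 1), i := by
    rw [Finset.sum_range_succ']
    simp
  rw [this, Finset.sum_range_id, Nat.succ_sub_one, mul_comm]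

/-- The constant sequence at the maximal symbol gives the monomial `Z_C^{m(m+1)/2}`,
and no other sequence gives this monomial for any permutation. -/
theorem maximal_sequence_monomial (m C : ℕ) (hm : 0 < m)
    (σ : Equiv.Perm (Fin m)) :
    seqMonomial (fun _ : Fin m => Fin.last C) σ
      = (X (Fin.last C) : MvPolynomial (Fin (C + 1)) ℤ) ^ (m * (m + 1) / 2) ∧
    ∀ (b : Fin m → Fin (C + 1)) (τ : Equiv.Perm (Fin m)),
      b ≠ (fun _ => Fin.last C) →
      seqMonomial b τ ≠ (X (Fin.last C)) ^ (m * (m + 1) / 2) := by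
  constructor
  · rw [seqMonomial, Finset.prod_pow_eq_pow_sum, sum_perm_succ]
  · intro b τ hb h
    obtain ⟨j, hj⟩ : ∃ j, b j ≠ Fin.last C := by
      by_contra h'
      push_neg at h'
      exact hb (funext h')
    have := congrArg (eval (fun k : Fin (C + 1) => if k = b j then (0 : ℤ) else 1)) h
    rw [seqMonomial, map_prod] at this
    simp only [map_pow, eval_X] at this
    rw [Finset.prod_eq_zero (Finset.mem_univ j) (by simp)] at this
    rw [if_neg (fun hc => hj hc.symm)] at this
    simp at this
end

section
/- Let a : Fin m → Fin C be a sequence, and let τ be a permutation of Fin m attuned to a (τ takes its largest values on the positions where a takes the symbol C, its next largest values on the positions where a takes C-1, and so on). If b ≠ a is another sequence with M^τ_b = M^τ_a as monomials, then b ≻ a in the lexicographic count order. -/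
open MvPolynomial

def seqCount {m C : ℕ} (a : Fin m → Fin C) (c : Fin C) : ℕ :=
  (Finset.univ.filter (fun i => a i = c)).card

/-- `a ≻ b` in the lexicographic count order. -/
def seqSucc {m C : ℕ} (a b : Fin m → Fin C) : Prop :=
  ∃ c : Fin C, (∀ c' : Fin C, c < c' → seqCount a c' = seqCount b c') ∧
    seqCount b c < seqCount a c

/-- `τ` is attuned to `a`: positions carrying larger symbols receive larger values of `τ`,
i.e. `τ` takes its largest values on `I_C`, its next largest on `I_{C-1}`, etc. -/
def Attuned {m C : ℕ} (τ : Equiv.Perm (Fin m)) (a : Fin m → Fin C) : Prop :=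
  ∀ i j : Fin m, a i < a j → τ i < τ j

/-- A set `A` on which `w` takes its top values is determined by its `w`-sum among sets of
at most the same cardinality. -/
lemma sum_eq_top_set {m : ℕ} (w : Fin m → ℕ) (hw : ∀ i, 0 < w i)
    (A B : Finset (Fin m)) (htop : ∀ i ∈ A, ∀ j ∉ A, w j < w i)
    (hsum : ∑ i ∈ B, w i = ∑ i ∈ A, w i) (hcard : B.card ≤ A.card) :
    B = A := by
  by_contra hBA
  have hsub : ¬ A ⊆ B := by
    intro h
    exact hBA (Finset.eq_of_subset_of_card_le h hcard).symm
  have hs_ne : (A \ B).Nonempty := by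
    rw [Finset.sdiff_nonempty]; exact hsub
  -- split sums
  have hsplitB : ∑ i ∈ B, w i = ∑ i ∈ B ∩ A, w i + ∑ i ∈ B \ A, w i :=
    (Finset.sum_inter_add_sum_sdiff B A w).symm
  have hsplitA : ∑ i ∈ A, w i = ∑ i ∈ B ∩ A, w i + ∑ i ∈ A \ B, w i := by
    rw [Finset.inter_comm]
    exact (Finset.sum_inter_add_sum_sdiff A B w).symm
  have hst_sum : ∑ i ∈ B \ A, w i = ∑ i ∈ A \ B, w i := by
    rw [hsplitB, hsplitA] at hsum
    omega
  have hst_card : (B \ A).card ≤ (A \ B).card := by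
    have h1 := Finset.card_sdiff_add_card_inter B A
    have h2 := Finset.card_sdiff_add_card_inter A B
    rw [Finset.inter_comm] at h2
    omega
  obtain ⟨x₀, hx₀s, hmin⟩ := Finset.exists_min_image (A \ B) w hs_ne
  have hx₀A : x₀ ∈ A := (Finset.mem_sdiff.mp hx₀s).1
  have h1 : ∑ j ∈ B \ A, w j ≤ (B \ A).card * (w x₀ - 1) := by
    have := Finset.sum_le_card_nsmul (B \ A) w (w x₀ - 1) (fun j hj => by
      have hjA : j ∉ A := (Finset.mem_sdiff.mp hj).2
      have := htop x₀ hx₀A j hjA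
      omega)
    simpa [smul_eq_mul] using this
  have h2 : (A \ B).card * w x₀ ≤ ∑ j ∈ A \ B, w j := by
    have := Finset.card_nsmul_le_sum (A \ B) w (w x₀) hmin
    simpa [smul_eq_mul] using this
  have h3 : (B \ A).card * (w x₀ - 1) ≤ (A \ B).card * (w x₀ - 1) :=
    Nat.mul_le_mul_right _ hst_card
  have hcardpos : 0 < (A \ B).card := Finset.card_pos.mpr hs_ne
  have hwx : 0 < w x₀ := hw x₀
  have hlt : (A \ B).card * (w x₀ - 1) < (A \ B).card * w x₀ :=
    Nat.mul_lt_mul_of_pos_left (by omega) hcardpos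
  linarith

lemma seqMonomial_eq_monomial {m C : ℕ} (a : Fin m → Fin C) (σ : Equiv.Perm (Fin m)) :
    seqMonomial a σ =
      monomial (∑ i : Fin m, Finsupp.single (a i) ((σ i : ℕ) + 1)) (1 : ℤ) := by
  rw [seqMonomial, monomial_sum_one]
  simp_rw [X_pow_eq_monomial]

theorem monomial_eq_attuned_implies_succ (m C : ℕ)
    (a b : Fin m → Fin C) (τ : Equiv.Perm (Fin m))
    (hτ : Attuned τ a) (hne : b ≠ a)
    (heq : seqMonomial b τ = seqMonomial a τ) :
    seqSucc b a := by
  classical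
  set w : Fin m → ℕ := fun i => (τ i : ℕ) + 1 with hw_def
  have hwpos : ∀ i, 0 < w i := fun i => Nat.succ_pos _
  have hwmono : ∀ i j : Fin m, a i < a j → w i < w j := by
    intro i j h
    have := hτ i j h
    simp only [hw_def]
    omega
  -- extract exponent equality
  have hexp : (∑ i : Fin m, Finsupp.single (b i) (w i)) =
      ∑ i : Fin m, Finsupp.single (a i) (w i) := by
    rw [seqMonomial_eq_monomial, seqMonomial_eq_monomial] at heq
    rcases (monomial_eq_monomial_iff _ _ _ _).mp heq with ⟨h, _⟩ | ⟨h, _⟩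
    · exact h
    · exact absurd h one_ne_zero
  -- per-symbol sums equal
  have hlev : ∀ c : Fin C,
      ∑ i ∈ Finset.univ.filter (fun i => b i = c), w i =
      ∑ i ∈ Finset.univ.filter (fun i => a i = c), w i := by
    intro c
    have := congrArg (fun f : Fin C →₀ ℕ => f c) hexp
    simp only [Finsupp.finset_sum_apply, Finsupp.single_apply] at this
    rwa [Finset.sum_filter, Finset.sum_filter]
  -- ℕ-threshold versions
  have hlevN : ∀ t : ℕ,
      ∑ i ∈ Finset.univ.filter (fun i => (b i : ℕ) = t), w i =
      ∑ i ∈ Finset.univ.filter (fun i => (a i : ℕ) = t), w i := by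
    intro t
    by_cases ht : t < C
    · have := hlev ⟨t, ht⟩
      have hb : (Finset.univ.filter (fun i => (b i : ℕ) = t)) =
          Finset.univ.filter (fun i => b i = (⟨t, ht⟩ : Fin C)) := by
        apply Finset.filter_congr; intro i _; simp [Fin.ext_iff]
      have ha : (Finset.univ.filter (fun i => (a i : ℕ) = t)) =
          Finset.univ.filter (fun i => a i = (⟨t, ht⟩ : Fin C)) := by
        apply Finset.filter_congr; intro i _; simp [Fin.ext_iff]
      rw [hb, ha]; exact this
    · have hb : (Finset.univ.filter (fun i => (b i : ℕ) = t)) = ∅ := by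
        apply Finset.filter_false_of_mem; intro i _
        have := (b i).isLt; omega
      have ha : (Finset.univ.filter (fun i => (a i : ℕ) = t)) = ∅ := by
        apply Finset.filter_false_of_mem; intro i _
        have := (a i).isLt; omega
      rw [hb, ha]
  -- threshold sets
  set A : ℕ → Finset (Fin m) := fun t => Finset.univ.filter (fun i => t ≤ (a i : ℕ)) with hA_def
  set B : ℕ → Finset (Fin m) := fun t => Finset.univ.filter (fun i => t ≤ (b i : ℕ)) with hB_def
  have hAempty : ∀ t, C ≤ t → A t = ∅ := by
    intro t ht
    apply Finset.filter_false_of_mem; intro i _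
    have := (a i).isLt; omega
  have hBempty : ∀ t, C ≤ t → B t = ∅ := by
    intro t ht
    apply Finset.filter_false_of_mem; intro i _
    have := (b i).isLt; omega
  -- decomposition of threshold sets
  have hAdec : ∀ t, A t = Finset.univ.filter (fun i => (a i : ℕ) = t) ∪ A (t + 1) := by
    intro t
    ext i
    simp only [hA_def, Finset.mem_union, Finset.mem_filter, Finset.mem_univ, true_and]
    omega
  have hBdec : ∀ t, B t = Finset.univ.filter (fun i => (b i : ℕ) = t) ∪ B (t + 1) := by
    intro t
    ext i
    simp only [hB_def, Finset.mem_union, Finset.mem_filter, Finset.mem_univ, true_and]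
    omega
  have hAdisj : ∀ t, Disjoint (Finset.univ.filter (fun i => (a i : ℕ) = t)) (A (t + 1)) := by
    intro t
    rw [Finset.disjoint_left]
    intro i hi hi'
    simp only [Finset.mem_filter, Finset.mem_univ, true_and] at hi
    simp only [hA_def, Finset.mem_filter, Finset.mem_univ, true_and] at hi'
    omega
  have hBdisj : ∀ t, Disjoint (Finset.univ.filter (fun i => (b i : ℕ) = t)) (B (t + 1)) := by
    intro t
    rw [Finset.disjoint_left]
    intro i hi hi'
    simp only [Finset.mem_filter, Finset.mem_univ, true_and] at hi
    simp only [hB_def, Finset.mem_filter, Finset.mem_univ, true_and] at hi'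
    omega
  have hAsum : ∀ t, ∑ i ∈ A t, w i =
      (∑ i ∈ Finset.univ.filter (fun i => (a i : ℕ) = t), w i) + ∑ i ∈ A (t + 1), w i := by
    intro t; rw [hAdec t, Finset.sum_union (hAdisj t)]
  have hBsum : ∀ t, ∑ i ∈ B t, w i =
      (∑ i ∈ Finset.univ.filter (fun i => (b i : ℕ) = t), w i) + ∑ i ∈ B (t + 1), w i := by
    intro t; rw [hBdec t, Finset.sum_union (hBdisj t)]
  have hAcard : ∀ t, (A t).card =
      (Finset.univ.filter (fun i => (a i : ℕ) = t)).card + (A (t + 1)).card := by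
    intro t; rw [hAdec t, Finset.card_union_of_disjoint (hAdisj t)]
  have hBcard : ∀ t, (B t).card =
      (Finset.univ.filter (fun i => (b i : ℕ) = t)).card + (B (t + 1)).card := by
    intro t; rw [hBdec t, Finset.card_union_of_disjoint (hBdisj t)]
  -- A t is a top set for w
  have htop : ∀ t, ∀ i ∈ A t, ∀ j ∉ A t, w j < w i := by
    intro t i hi j hj
    simp only [hA_def, Finset.mem_filter, Finset.mem_univ, true_and] at hi hj
    exact hwmono j i (by omega)
  -- threshold sums are equal
  have hN : ∀ t, ∑ i ∈ B t, w i = ∑ i ∈ A t, w i := by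
    have aux : ∀ k t, C ≤ t + k → ∑ i ∈ B t, w i = ∑ i ∈ A t, w i := by
      intro k
      induction k with
      | zero => intro t ht; rw [hAempty t (by omega), hBempty t (by omega)]
      | succ k ih =>
        intro t ht
        by_cases htC : C ≤ t
        · rw [hAempty t htC, hBempty t htC]
        · rw [hAsum t, hBsum t, hlevN t, ih (t + 1) (by omega)]
    intro t
    exact aux C t (Nat.le_add_left C t)
  -- counts in terms of ℕ-threshold filters
  have hcount_a : ∀ c : Fin C,
      (Finset.univ.filter (fun i => (a i : ℕ) = (c : ℕ))).card = seqCount a c := by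
    intro c
    unfold seqCount
    congr 1
    apply Finset.filter_congr; intro i _; simp [Fin.ext_iff]
  have hcount_b : ∀ c : Fin C,
      (Finset.univ.filter (fun i => (b i : ℕ) = (c : ℕ))).card = seqCount b c := by
    intro c
    unfold seqCount
    congr 1
    apply Finset.filter_congr; intro i _; simp [Fin.ext_iff]
  -- if counts agree from threshold t upward, the threshold sets agree
  have hBA : ∀ t : ℕ, (∀ c : Fin C, t ≤ (c : ℕ) → seqCount b c = seqCount a c) →
      ∀ s, t ≤ s → B s = A s := by
    intro t hcnt
    have aux : ∀ k s, C ≤ s + k → t ≤ s → B s = A s := by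
      intro k
      induction k with
      | zero => intro s hs _; rw [hAempty s (by omega), hBempty s (by omega)]
      | succ k ih =>
        intro s hs hts
        by_cases hsC : C ≤ s
        · rw [hAempty s hsC, hBempty s hsC]
        · have htail : B (s + 1) = A (s + 1) := ih (s + 1) (by omega) (by omega)
          have hcards : (B s).card ≤ (A s).card := by
            rw [hAcard s, hBcard s, htail]
            have hsC' : s < C := by omega
            have := hcnt ⟨s, hsC'⟩ hts
            rw [← hcount_a ⟨s, hsC'⟩, ← hcount_b ⟨s, hsC'⟩] at this
            simp only [Fin.val_mk] at this
            omega
          exact sum_eq_top_set w hwpos (A s) (B s) (htop s) (hN s) hcards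
    intro s hts
    exact aux C s (Nat.le_add_left C s) hts
  -- main case analysis
  by_cases hD : ∀ c : Fin C, seqCount b c = seqCount a c
  · exfalso
    have hall : ∀ s, B s = A s := fun s => hBA 0 (fun c _ => hD c) s (Nat.zero_le s)
    apply hne
    funext i
    have h1 : i ∈ B ((a i : ℕ)) := by
      rw [hall]
      simp [hA_def]
    have h2 : i ∈ A ((b i : ℕ)) := by
      rw [← hall]
      simp [hB_def]
    simp only [hA_def, hB_def, Finset.mem_filter, Finset.mem_univ, true_and] at h1 h2
    exact Fin.ext (by omega)
  · push_neg at hD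
    obtain ⟨c₀, hc₀⟩ := hD
    set D : Finset (Fin C) := Finset.univ.filter (fun c => seqCount b c ≠ seqCount a c)
      with hD_def
    have hDne : D.Nonempty := ⟨c₀, by simp [hD_def, hc₀]⟩
    set cs : Fin C := D.max' hDne with hcs_def
    have hcsD : cs ∈ D := D.max'_mem hDne
    have hcs_ne : seqCount b cs ≠ seqCount a cs := by
      simpa [hD_def] using hcsD
    have hAbove : ∀ c' : Fin C, cs < c' → seqCount b c' = seqCount a c' := by
      intro c' hc'
      by_contra h
      have : c' ∈ D := by simp [hD_def, h]
      have := D.le_max' c' this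
      exact absurd hc' (not_lt.mpr this)
    refine ⟨cs, fun c' hc' => hAbove c' hc', ?_⟩
    have htail : B ((cs : ℕ) + 1) = A ((cs : ℕ) + 1) := by
      apply hBA ((cs : ℕ) + 1) _ _ le_rfl
      intro c hc
      exact hAbove c (by exact hc)
    by_contra hle
    push_neg at hle
    have hcards : (B (cs : ℕ)).card ≤ (A (cs : ℕ)).card := by
      rw [hAcard, hBcard, htail, hcount_a cs, hcount_b cs]
      omega
    have := sum_eq_top_set w hwpos (A (cs : ℕ)) (B (cs : ℕ)) (htop _) (hN _) hcards
    apply hcs_ne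
    have := congrArg Finset.card this
    rw [hAcard, hBcard, htail, hcount_a cs, hcount_b cs] at this
    omega
end

section
/- Let a : Fin m → Fin C and let τ be attuned to a. If b : Fin m → Fin C satisfies ∑_{i : b(i)=c} τ(i) = ∑_{i : a(i)=c} τ(i) for all c ∈ Fin C, then either b = a, or the number of occurrences of the maximal symbol C in b is at least the number of occurrences of C in a. -/
/-- If the exponent sums of `b` and `a` with respect to a permutation attuned to `a`
agree for every symbol, then either `b = a` or `b` has at least as many occurrences
of the maximal symbol as `a`. -/
theorem attuned_sum_eq_max_symbol (m C : ℕ)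
    (a b : Fin m → Fin (C + 1)) (τ : Equiv.Perm (Fin m))
    (hτ : Attuned τ a)
    (hsum : ∀ c : Fin (C + 1),
      ∑ i ∈ Finset.univ.filter (fun i => b i = c), ((τ i : ℕ) + 1)
        = ∑ i ∈ Finset.univ.filter (fun i => a i = c), ((τ i : ℕ) + 1)) :
    b = a ∨ seqCount a (Fin.last C) ≤ seqCount b (Fin.last C) := by
  right
  set A : Finset (Fin m) := Finset.univ.filter (fun i => a i = Fin.last C) with hA
  set B : Finset (Fin m) := Finset.univ.filter (fun i => b i = Fin.last C) with hB
  show A.card ≤ B.card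
  set k := A.card with hk
  -- attuned: elements outside A have smaller τ than elements of A
  have key : ∀ i, i ∉ A → ∀ j, j ∈ A → τ i < τ j := by
    intro i hi j hj
    simp only [hA, Finset.mem_filter, Finset.mem_univ, true_and] at hi hj
    exact hτ i j (by rw [hj]; exact lt_of_le_of_ne (Fin.le_last _) hi)
  -- elements of A have τ value ≥ m - k
  have hAlb : ∀ j ∈ A, m - k ≤ (τ j : ℕ) := by
    intro j hj
    have hinj : Set.InjOn τ ↑(Finset.univ \ A) := fun x _ y _ h => τ.injective h
    have hsub : (Finset.univ \ A).card ≤ (Finset.Iio (τ j)).card := by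
      apply Finset.card_le_card_of_injOn τ _ hinj
      intro i hi
      rw [Finset.mem_coe, Finset.mem_Iio]
      exact key i (by simpa using hi) j hj
    rw [Fin.card_Iio, Finset.card_sdiff_of_subset (Finset.subset_univ _), Finset.card_univ,
      Fintype.card_fin] at hsub
    exact hsub
  -- elements outside A have τ value + 1 ≤ m - k
  have hBub : ∀ i, i ∉ A → (τ i : ℕ) + 1 + k ≤ m := by
    intro i hi
    have hinj : Set.InjOn τ ↑A := fun x _ y _ h => τ.injective h
    have hsub : A.card ≤ (Finset.Ioi (τ i)).card := by
      apply Finset.card_le_card_of_injOn τ _ hinj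
      intro j hj
      rw [Finset.mem_coe, Finset.mem_Ioi]
      exact key i hi j (by simpa using hj)
    rw [Fin.card_Ioi] at hsub
    have : (τ i : ℕ) < m := (τ i).isLt
    omega
  by_contra hlt
  push_neg at hlt
  -- sums over the symmetric differences are equal
  have hSum : ∑ i ∈ B, ((τ i : ℕ) + 1) = ∑ i ∈ A, ((τ i : ℕ) + 1) := hsum (Fin.last C)
  have hsplitA : ∑ i ∈ A ∩ B, ((τ i : ℕ) + 1) + ∑ i ∈ A \ B, ((τ i : ℕ) + 1)
      = ∑ i ∈ A, ((τ i : ℕ) + 1) := Finset.sum_inter_add_sum_sdiff A B _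
  have hsplitB : ∑ i ∈ B ∩ A, ((τ i : ℕ) + 1) + ∑ i ∈ B \ A, ((τ i : ℕ) + 1)
      = ∑ i ∈ B, ((τ i : ℕ) + 1) := Finset.sum_inter_add_sum_sdiff B A _
  rw [Finset.inter_comm] at hsplitB
  have hdiffeq : ∑ i ∈ A \ B, ((τ i : ℕ) + 1) = ∑ i ∈ B \ A, ((τ i : ℕ) + 1) := by
    omega
  -- cardinalities
  have hcA : (A ∩ B).card + (A \ B).card = A.card := Finset.card_inter_add_card_sdiff A B
  have hcB : (B ∩ A).card + (B \ A).card = B.card := Finset.card_inter_add_card_sdiff B A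
  rw [Finset.inter_comm] at hcB
  have hcard : (B \ A).card + 1 ≤ (A \ B).card := by omega
  -- bound the sums
  have hub : ∑ i ∈ B \ A, ((τ i : ℕ) + 1) ≤ (B \ A).card * (m - k) := by
    apply Finset.sum_le_card_nsmul
    intro i hi
    have := hBub i (Finset.mem_sdiff.mp hi).2
    omega
  have hlb : (A \ B).card * (m - k + 1) ≤ ∑ i ∈ A \ B, ((τ i : ℕ) + 1) := by
    have := Finset.card_nsmul_le_sum (A \ B) (fun i => (τ i : ℕ) + 1) (m - k + 1)
      (fun j hj => by show m - k + 1 ≤ (τ j : ℕ) + 1; have := hAlb j (Finset.sdiff_subset hj); omega)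
    simpa using this
  have hmono : (B \ A).card * (m - k) + (m - k) ≤ (A \ B).card * (m - k + 1) := by
    calc (B \ A).card * (m - k) + (m - k) = ((B \ A).card + 1) * (m - k) := by ring
    _ ≤ (A \ B).card * (m - k + 1) :=
      Nat.mul_le_mul hcard (Nat.le_succ _)
  have hpos : 1 ≤ (A \ B).card := by omega
  have hstrict : (B \ A).card * (m - k) < (A \ B).card * (m - k + 1) := by
    have := Nat.mul_le_mul hcard (le_refl (m - k + 1))
    nlinarith
  omega
end

section
/- Let k ≥ 2 and let Q be a polynomial of total degree strictly less than k(k+1)/2 in the coordinates of its #S⁰_{k+1} vector arguments in ℝ^k, invariant under all permutations of those arguments. Then for all x ∈ ℝ^{k+1}: Q((x_σ)_{σ ∈ S⁰_{k+1}}) = Q((x_σ)_{σ ∈ S¹_{k+1}}), where x_σ = (x_{σ(1)},...,x_{σ(k)}). -/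
open MvPolynomial

private lemma hc_td_ne_zero {σ R : Type*} [CommRing R] {p : MvPolynomial σ R} (hp : p ≠ 0) :
    homogeneousComponent p.totalDegree p ≠ 0 := by
  obtain ⟨d, hd, hsup⟩ := Finset.exists_mem_eq_sup p.support (support_nonempty.mpr hp)
    (fun s => s.sum fun _ e => e)
  have hdeg : d.degree = p.totalDegree := by
    rw [totalDegree, hsup]
    simp [Finsupp.degree, Finsupp.sum]; rfl
  intro h0
  have := coeff_homogeneousComponent (σ := σ) p.totalDegree p d
  rw [h0, if_pos hdeg] at this
  exact (mem_support_iff.mp hd) (by simpa using this.symm)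

private lemma sub_hc_lt {σ R : Type*} [CommRing R] (p : MvPolynomial σ R)
    (h : p - homogeneousComponent p.totalDegree p ≠ 0) :
    (p - homogeneousComponent p.totalDegree p).totalDegree < p.totalDegree := by
  set q := p - homogeneousComponent p.totalDegree p with hq
  have hsupp : ∀ d ∈ q.support, (d.sum fun _ e => e) < p.totalDegree := by
    intro d hd
    have hcq : coeff d q ≠ 0 := mem_support_iff.mp hd
    have hcoeff : coeff d q = coeff d p - if d.degree = p.totalDegree then coeff d p else 0 := by
      rw [hq, coeff_sub, coeff_homogeneousComponent]
    by_cases hdd : d.degree = p.totalDegree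
    · rw [if_pos hdd] at hcoeff; simp at hcoeff; exact absurd hcoeff hcq
    · have hdp : d ∈ p.support := by
        rw [if_neg hdd, sub_zero] at hcoeff
        exact mem_support_iff.mpr (hcoeff ▸ hcq)
      have hle := le_totalDegree hdp
      have : d.degree = d.sum fun _ e => e := by simp [Finsupp.degree, Finsupp.sum]; rfl
      omega
  have hne : q.support.Nonempty := support_nonempty.mpr h
  obtain ⟨d, hd, hsup⟩ := Finset.exists_mem_eq_sup q.support hne (fun s => s.sum fun _ e => e)
  rw [totalDegree, hsup]
  exact hsupp d hd

lemma my_totalDegree_mul {σ R : Type*} [CommRing R] [IsDomain R] {p q : MvPolynomial σ R}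
    (hp : p ≠ 0) (hq : q ≠ 0) :
    (p * q).totalDegree = p.totalDegree + q.totalDegree := by
  set Hp := homogeneousComponent p.totalDegree p with hHp
  set Hq := homogeneousComponent q.totalDegree q with hHq
  have hHpne : Hp ≠ 0 := hc_td_ne_zero hp
  have hHqne : Hq ≠ 0 := hc_td_ne_zero hq
  have hHpH : Hp.IsHomogeneous p.totalDegree := homogeneousComponent_isHomogeneous _ _
  have hHqH : Hq.IsHomogeneous q.totalDegree := homogeneousComponent_isHomogeneous _ _
  have hprod : (Hp * Hq).IsHomogeneous (p.totalDegree + q.totalDegree) := hHpH.mul hHqH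
  have hprodne : Hp * Hq ≠ 0 := mul_ne_zero hHpne hHqne
  have hprodtd : (Hp * Hq).totalDegree = p.totalDegree + q.totalDegree :=
    hprod.totalDegree hprodne
  have key : p * q = Hp * Hq + ((p - Hp) * q + Hp * (q - Hq)) := by ring
  by_cases hE : (p - Hp) * q + Hp * (q - Hq) = 0
  · rw [key, hE, add_zero, hprodtd]
  · have hlt : ((p - Hp) * q + Hp * (q - Hq)).totalDegree < p.totalDegree + q.totalDegree := by
      have h1 : ((p - Hp) * q).totalDegree < p.totalDegree + q.totalDegree ∨ (p - Hp) * q = 0 := by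
        by_cases h : p - Hp = 0
        · right; rw [h, zero_mul]
        · left
          calc ((p - Hp) * q).totalDegree ≤ (p - Hp).totalDegree + q.totalDegree :=
                totalDegree_mul _ _
            _ < p.totalDegree + q.totalDegree := by
                have h3 := sub_hc_lt p (hHp ▸ h)
                rw [← hHp] at h3; omega
      have h2 : (Hp * (q - Hq)).totalDegree < p.totalDegree + q.totalDegree ∨ Hp * (q - Hq) = 0 := by
        by_cases h : q - Hq = 0
        · right; rw [h, mul_zero]
        · left
          calc (Hp * (q - Hq)).totalDegree ≤ Hp.totalDegree + (q - Hq).totalDegree :=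
                totalDegree_mul _ _
            _ < p.totalDegree + q.totalDegree := by
                have h1 := sub_hc_lt q (hHq ▸ h)
                rw [← hHq] at h1
                have h2 := hHpH.totalDegree_le
                omega
      -- combine
      rcases h1 with h1 | h1 <;> rcases h2 with h2 | h2
      · exact lt_of_le_of_lt (totalDegree_add _ _) (max_lt h1 h2)
      · rw [h2, add_zero]; exact h1
      · rw [h1, zero_add]; exact h2
      · exact absurd (by rw [h1, h2, add_zero]) hE
    rw [key, totalDegree_add_eq_left_of_totalDegree_lt (hprodtd ▸ hlt), hprodtd]

lemma prime_X_sub_X {k : ℕ} {a b : Fin (k + 1)} (hab : a ≠ b) :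
    Prime (X a - X b : MvPolynomial (Fin (k + 1)) ℝ) := by
  let ρ : Equiv.Perm (Fin (k + 1)) := Equiv.swap a 0
  let φ := (renameEquiv ℝ ρ).trans (MvPolynomial.finSuccEquiv ℝ k)
  have hρa : ρ a = 0 := Equiv.swap_apply_left a 0
  have hρb : ρ b ≠ 0 := by
    rw [← hρa]
    exact fun h => hab (ρ.injective h).symm
  obtain ⟨m, hm⟩ : ∃ m, ρ b = Fin.succ m := ⟨(ρ b).pred hρb, (Fin.succ_pred _ _).symm⟩
  have hφ : φ (X a - X b)
      = Polynomial.X - Polynomial.C (X m) := by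
    rw [map_sub]
    have h1 : φ (X a) = Polynomial.X := by
      simp only [φ, AlgEquiv.trans_apply, renameEquiv_apply, rename_X, hρa, finSuccEquiv_X_zero]
    have h2 : φ (X b) = Polynomial.C (X m) := by
      simp only [φ, AlgEquiv.trans_apply, renameEquiv_apply, rename_X]
      rw [hm, finSuccEquiv_X_succ]
    rw [h1, h2]
  have hp : Prime (φ (X a - X b)) := by
    rw [hφ]; exact Polynomial.prime_X_sub_C _
  exact (MulEquiv.prime_iff φ).mp hp

lemma dvd_sub_rename {k : ℕ} (a b : Fin (k + 1)) (p : MvPolynomial (Fin (k + 1)) ℝ) :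
    (X a - X b) ∣ (p - rename (fun t => if t = a then b else t) p) := by
  induction p using MvPolynomial.induction_on with
  | C c => simp
  | add p q hp hq =>
    have : p + q - rename (fun t => if t = a then b else t) (p + q)
        = (p - rename (fun t => if t = a then b else t) p)
          + (q - rename (fun t => if t = a then b else t) q) := by
      rw [map_add]; ring
    rw [this]; exact dvd_add hp hq
  | mul_X p s hp =>
    have hXs : (X a - X b) ∣ (X s - X (if s = a then b else s) : MvPolynomial (Fin (k+1)) ℝ) := by
      by_cases h : s = a
      · rw [if_pos h, h]
      · rw [if_neg h, sub_self]; exact dvd_zero _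
    have : p * X s - rename (fun t => if t = a then b else t) (p * X s)
        = (p - rename (fun t => if t = a then b else t) p) * X s
          + rename (fun t => if t = a then b else t) p
            * (X s - X (if s = a then b else s)) := by
      rw [map_mul, rename_X]; ring
    rw [this]
    exact dvd_add (Dvd.dvd.mul_right hp _) (Dvd.dvd.mul_left hXs _)

private lemma eq_C_of_td_zero {σ R : Type*} [CommRing R] {p : MvPolynomial σ R}
    (h : p.totalDegree = 0) : p = C (coeff 0 p) := by
  classical
  rw [totalDegree_eq_zero_iff] at h
  ext d
  by_cases hd : d = 0
  · subst hd; simp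
  · rw [coeff_C, if_neg (by exact fun hh => hd hh.symm)]
    by_contra hc
    exact hd (Finsupp.ext (h d (mem_support_iff.mpr hc)))


private lemma td_X_sub_X {k : ℕ} {a b : Fin (k+1)} (hab : a ≠ b) :
    (X a - X b : MvPolynomial (Fin (k+1)) ℝ).totalDegree = 1 := by
  have hh : (X a - X b : MvPolynomial (Fin (k+1)) ℝ).IsHomogeneous 1 :=
    (isHomogeneous_X _ _).sub (isHomogeneous_X _ _)
  have hne : (X a - X b : MvPolynomial (Fin (k+1)) ℝ) ≠ 0 := by
    intro h0
    have := congrArg (coeff (Finsupp.single a 1)) h0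
    classical
    simp only [coeff_sub, coeff_X', coeff_zero, if_pos rfl,
      Finsupp.single_left_inj (one_ne_zero (α := ℕ))] at this
    rw [if_neg hab.symm] at this
    norm_num at this
  exact hh.totalDegree hne



private lemma not_assoc {k : ℕ} {a b c d : Fin (k+1)} (hba : b < a) (hdc : d < c)
    (hne : (a, b) ≠ (c, d)) :
    ¬ Associated (X a - X b : MvPolynomial (Fin (k+1)) ℝ) (X c - X d) := by
  classical
  rintro ⟨u, hu⟩
  have hab : a ≠ b := hba.ne'
  have hcd : c ≠ d := hdc.ne'
  have hu0 : (u : MvPolynomial (Fin (k+1)) ℝ) ≠ 0 := u.ne_zero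
  have h1 : (X a - X b : MvPolynomial (Fin (k+1)) ℝ) ≠ 0 := (prime_X_sub_X hab).ne_zero
  have htd : ((X a - X b : MvPolynomial (Fin (k+1)) ℝ) * u).totalDegree = 1 + (u : MvPolynomial (Fin (k+1)) ℝ).totalDegree := by
    rw [my_totalDegree_mul h1 hu0, td_X_sub_X hab]
  rw [hu, td_X_sub_X hcd] at htd
  have hu_td : (u : MvPolynomial (Fin (k+1)) ℝ).totalDegree = 0 := by omega
  set r := coeff 0 (u : MvPolynomial (Fin (k+1)) ℝ) with hr
  have hC : (u : MvPolynomial (Fin (k+1)) ℝ) = C r := eq_C_of_td_zero hu_td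
  have heq : (X c - X d : MvPolynomial (Fin (k+1)) ℝ) = C r * (X a - X b) := by
    rw [← hu, hC]; ring
  have hco : ∀ t : Fin (k+1),
      ((if c = t then (1:ℝ) else 0) - (if d = t then 1 else 0))
        = r * ((if a = t then 1 else 0) - (if b = t then 1 else 0)) := by
    intro t
    have := congrArg (coeff (Finsupp.single t 1)) heq
    simpa [coeff_sub, coeff_C_mul, coeff_X',
      Finsupp.single_left_inj (one_ne_zero (α := ℕ))] using this
  have hc1 := hco c
  have hd1 := hco d
  rw [if_pos rfl, if_neg hdc.ne] at hc1
  rw [if_pos rfl, if_neg hdc.ne'] at hd1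
  by_cases hac : a = c
  · have hbc : b ≠ c := by rw [← hac]; exact hba.ne
    rw [if_pos hac, if_neg hbc] at hc1
    have hrr : r = 1 := by linarith [hc1]
    have had : a ≠ d := by rw [hac]; exact hdc.ne'
    rw [if_neg had, hrr] at hd1
    by_cases hbd : b = d
    · exact hne (by rw [hac, hbd])
    · rw [if_neg hbd] at hd1; norm_num at hd1
  · rw [if_neg hac] at hc1
    by_cases hbc : b = c
    · rw [if_pos hbc] at hc1
      have hrr : r = -1 := by linarith [hc1]
      rw [hrr] at hd1
      by_cases had : a = d
      · -- a = d, b = c : then d < c becomes a < b, contradicting b < a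
        rw [← had, ← hbc] at hdc
        exact absurd hdc (not_lt.mpr hba.le)
      · rw [if_neg had] at hd1
        by_cases hbd : b = d
        · rw [if_pos hbd] at hd1; norm_num at hd1
        · rw [if_neg hbd] at hd1; norm_num at hd1
    · rw [if_neg hbc] at hc1; norm_num at hc1


private lemma vandermonde_le_totalDegree {k : ℕ} {D : MvPolynomial (Fin (k+1)) ℝ}
    (hdvd : ∀ a b : Fin (k+1), a ≠ b → (X a - X b) ∣ D) (hD : D ≠ 0) :
    k * (k+1) / 2 ≤ D.totalDegree := by
  classical
  let emb : ((i : Fin (k+1)) × Fin i.val) → Fin (k+1) := fun s => ⟨s.2.val, lt_trans s.2.isLt s.1.isLt⟩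
  have hlt : ∀ s : ((i : Fin (k+1)) × Fin i.val), emb s < s.1 := fun s => by
    simp only [Fin.lt_def, emb]; exact s.2.isLt
  let f : ((i : Fin (k+1)) × Fin i.val) → MvPolynomial (Fin (k+1)) ℝ := fun s => X s.1 - X (emb s)
  have hprime : ∀ s : ((i : Fin (k+1)) × Fin i.val), Prime (f s) := fun s => prime_X_sub_X (hlt s).ne'
  have hdvd' : ∀ s : ((i : Fin (k+1)) × Fin i.val), f s ∣ D := fun s => hdvd _ _ (hlt s).ne'
  have hcount : ∀ p : MvPolynomial (Fin (k+1)) ℝ,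
      Multiset.countP (Associated p) ((Finset.univ : Finset ((i : Fin (k+1)) × Fin i.val)).val.map f) ≤ 1 := by
    intro p
    rw [Multiset.countP_map]
    have : Multiset.filter (fun s => Associated p (f s)) (Finset.univ : Finset ((i : Fin (k+1)) × Fin i.val)).val
        = (Finset.univ.filter (fun s => Associated p (f s))).val := by
      rw [Finset.filter_val]
    rw [this]
    show (Finset.univ.filter (fun s => Associated p (f s))).card ≤ 1
    rw [Finset.card_le_one]
    intro x hx y hy
    rw [Finset.mem_filter] at hx hy
    by_contra hxy
    have hassoc : Associated (f x) (f y) := hx.2.symm.trans hy.2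
    have hpairne : (x.1, emb x) ≠ (y.1, emb y) := by
      intro hp
      apply hxy
      have h1 : x.1 = y.1 := congrArg Prod.fst hp
      have h2 : emb x = emb y := congrArg Prod.snd hp
      have h3 : x.2.val = y.2.val := congrArg Fin.val h2
      cases x with | mk x1 x2 => cases y with | mk y1 y2 =>
        subst h1
        exact congrArg (Sigma.mk x1) (Fin.ext h3)
    exact not_assoc (hlt x) (hlt y) hpairne hassoc
  have hVdvd : (∏ s : ((i : Fin (k+1)) × Fin i.val), f s) ∣ D := by
    rw [Finset.prod_eq_multiset_prod]
    exact Multiset.prod_primes_dvd D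
      (by intro a ha; obtain ⟨s, _, rfl⟩ := Multiset.mem_map.mp ha; exact hprime s)
      (by intro a ha; obtain ⟨s, _, rfl⟩ := Multiset.mem_map.mp ha; exact hdvd' s)
      hcount
  have hVne : (∏ s : ((i : Fin (k+1)) × Fin i.val), f s) ≠ 0 :=
    Finset.prod_ne_zero_iff.mpr fun s _ => (hprime s).ne_zero
  have hcard : ∑ s : ((i : Fin (k+1)) × Fin i.val), 1 = k * (k+1) / 2 := by
    rw [Finset.sum_const, smul_eq_mul, mul_one, Finset.card_univ]
    rw [Fintype.card_sigma]
    simp only [Fintype.card_fin]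
    rw [Fin.sum_univ_eq_sum_range (fun i => i) (k+1), Finset.sum_range_id]
    simp [Nat.mul_comm]
  have hVtd : (∏ s : ((i : Fin (k+1)) × Fin i.val), f s).totalDegree = k * (k+1) / 2 := by
    have hhom : (∏ s : ((i : Fin (k+1)) × Fin i.val), f s).IsHomogeneous (∑ s : ((i : Fin (k+1)) × Fin i.val), 1) :=
      IsHomogeneous.prod _ _ _ fun s _ => (isHomogeneous_X _ _).sub (isHomogeneous_X _ _)
    rw [hcard] at hhom
    exact hhom.totalDegree hVne
  obtain ⟨w, hw⟩ := hVdvd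
  have hwne : w ≠ 0 := by rintro rfl; rw [mul_zero] at hw; exact hD hw
  have := my_totalDegree_mul hVne hwne
  rw [← hw, hVtd] at this
  omega


/-- A permutation-invariant polynomial `Q` of the source tuples of total degree
strictly less than `k(k+1)/2` takes equal values on the even- and odd-indexed families. -/
theorem even_odd_eq_of_low_degree (k : ℕ) (hk : 2 ≤ k)
    (Q : MvPolynomial ({σ : Equiv.Perm (Fin (k + 1)) // Equiv.Perm.sign σ = 1} × Fin k) ℝ)
    (hdeg : Q.totalDegree < k * (k + 1) / 2)
    (hQ : ∀ π : Equiv.Perm {σ : Equiv.Perm (Fin (k + 1)) // Equiv.Perm.sign σ = 1},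
      rename (fun p : {σ : Equiv.Perm (Fin (k + 1)) // Equiv.Perm.sign σ = 1} × Fin k =>
        (π p.1, p.2)) Q = Q)
    (e : {σ : Equiv.Perm (Fin (k + 1)) // Equiv.Perm.sign σ = 1}
      ≃ {σ : Equiv.Perm (Fin (k + 1)) // Equiv.Perm.sign σ = -1}) :
    ∀ x : Fin (k + 1) → ℝ,
      eval (fun p => x ((p.1 : Equiv.Perm (Fin (k + 1))) p.2.succ)) Q
        = eval (fun p => x (((e p.1 : {σ : Equiv.Perm (Fin (k + 1)) // Equiv.Perm.sign σ = -1})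
            : Equiv.Perm (Fin (k + 1))) p.2.succ)) Q := by
  classical
  set f₁ : {σ : Equiv.Perm (Fin (k + 1)) // Equiv.Perm.sign σ = 1} × Fin k → Fin (k + 1) :=
    fun p => (p.1 : Equiv.Perm (Fin (k + 1))) p.2.succ with hf₁
  set f₂ : {σ : Equiv.Perm (Fin (k + 1)) // Equiv.Perm.sign σ = 1} × Fin k → Fin (k + 1) :=
    fun p => ((e p.1 : {σ : Equiv.Perm (Fin (k + 1)) // Equiv.Perm.sign σ = -1})
      : Equiv.Perm (Fin (k + 1))) p.2.succ with hf₂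
  set D : MvPolynomial (Fin (k + 1)) ℝ := rename f₁ Q - rename f₂ Q with hD
  -- Step 1: D vanishes whenever two coordinates agree
  have hdiag : ∀ (y : Fin (k + 1) → ℝ) (i j : Fin (k + 1)), i ≠ j → y i = y j →
      eval y D = 0 := by
    intro y i j hij hyij
    have hyτ : ∀ t, y (Equiv.swap i j t) = y t := by
      intro t
      rcases Equiv.swap_apply_def i j t with _
      by_cases h1 : t = i
      · rw [h1, Equiv.swap_apply_left, hyij]
      · by_cases h2 : t = j
        · rw [h2, Equiv.swap_apply_right, hyij]
        · rw [Equiv.swap_apply_of_ne_of_ne h1 h2]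
    have hsignτ : Equiv.Perm.sign (Equiv.swap i j) = -1 := Equiv.Perm.sign_swap hij
    let f : {σ : Equiv.Perm (Fin (k + 1)) // Equiv.Perm.sign σ = 1} ≃ {σ : Equiv.Perm (Fin (k + 1)) // Equiv.Perm.sign σ = -1} :=
      { toFun := fun σ => ⟨Equiv.swap i j * σ.1, by
          rw [map_mul, hsignτ, σ.2]; simp⟩
        invFun := fun σ => ⟨Equiv.swap i j * σ.1, by
          rw [map_mul, hsignτ, σ.2]; simp⟩
        left_inv := fun σ => Subtype.ext (by
          simp only [← mul_assoc, Equiv.swap_mul_self, one_mul])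
        right_inv := fun σ => Subtype.ext (by
          simp only [← mul_assoc, Equiv.swap_mul_self, one_mul]) }
    let π : Equiv.Perm {σ : Equiv.Perm (Fin (k + 1)) // Equiv.Perm.sign σ = 1} := f.trans e.symm
    have key : eval (y ∘ f₂) Q = eval (y ∘ f₁) Q := by
      conv_lhs => rw [← hQ π, eval_rename]
      have hfun : ((y ∘ f₂) ∘ fun p => (π p.1, p.2)) = y ∘ f₁ := by
        funext p
        show y (f₂ (π p.1, p.2)) = y (f₁ p)
        have : e (π p.1) = f p.1 := e.apply_symm_apply _
        rw [hf₂]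
        simp only
        rw [this]
        show y ((Equiv.swap i j * p.1.1) p.2.succ) = y (f₁ p)
        rw [Equiv.Perm.mul_apply, hyτ]
      rw [hfun]
    rw [hD, map_sub, eval_rename, eval_rename, key, sub_self]
  -- Step 2: each X a - X b divides D
  have hdvd : ∀ a b : Fin (k + 1), a ≠ b → (X a - X b) ∣ D := by
    intro a b hab
    have hren : rename (fun t => if t = a then b else t) D = 0 := by
      apply MvPolynomial.funext
      intro y
      rw [eval_rename, map_zero]
      apply hdiag _ a b hab
      show y (if a = a then b else a) = y (if b = a then b else b)
      rw [if_pos rfl, if_neg (Ne.symm hab)]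
    have := dvd_sub_rename a b D
    rwa [hren, sub_zero] at this
  -- Step 3: D = 0
  have hD0 : D = 0 := by
    by_contra hne
    have h1 : k * (k + 1) / 2 ≤ D.totalDegree := vandermonde_le_totalDegree hdvd hne
    have h2 : D.totalDegree ≤ Q.totalDegree := by
      rw [hD]
      refine le_trans (totalDegree_sub _ _) ?_
      exact max_le (totalDegree_rename_le _ _) (totalDegree_rename_le _ _)
    omega
  -- Conclude
  intro x
  have := congrArg (eval x) hD0
  rw [hD, map_sub, map_zero, sub_eq_zero, eval_rename, eval_rename] at this
  exact this
end
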